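/- Define the asymptotic score function T(x) = (1/2 - κ + x(κq - 1)) / sqrt(x(1-x)) for x ∈ (0,1). If 0 < κ < 1/(2(q-1)) with q ≥ 2, then T is strictly monotonically decreasing on (0,1). -/

import Mathlib

theorem stmt_10 (q : ℕ) (hq : 2 ≤ q) (κ : ℝ) (hκ : 0 < κ)
    (hκ2 : κ < 1 / (2 * ((q : ℝ) - 1))) :
    StrictAntiOn (fun x : ℝ => (1/2 - κ + x * (κ * q - 1)) / Real.sqrt (x * (1 - x)))
      (Set.Ioo 0 1) := by
  have hqR : (2:ℝ) ≤ (q:ℝ) := by exact_mod_cast hq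
  have hden : (0:ℝ) < 2 * ((q:ℝ) - 1) := by linarith
  have hkey : κ * (2 * ((q:ℝ) - 1)) < 1 := (lt_div_iff₀ hden).mp hκ2
  apply strictAntiOn_of_deriv_neg (convex_Ioo (0:ℝ) 1)
  · apply ContinuousOn.div
    · fun_prop
    · fun_prop
    · intro x hx
      obtain ⟨hx0, hx1⟩ := hx
      have : 0 < x * (1 - x) := mul_pos hx0 (by linarith)
      exact ne_of_gt (Real.sqrt_pos.mpr this)
  · intro x hx
    rw [interior_Ioo] at hx
    obtain ⟨hx0, hx1⟩ := hx
    have hu : 0 < x * (1 - x) := mul_pos hx0 (by linarith)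
    set s := Real.sqrt (x * (1 - x)) with hs_def
    have hs : 0 < s := Real.sqrt_pos.mpr hu
    have hs2 : s ^ 2 = x * (1 - x) := Real.sq_sqrt hu.le
    -- derivative of inner function
    have hinner : HasDerivAt (fun y : ℝ => y * (1 - y)) (1 - 2 * x) x := by
      have h1 := (hasDerivAt_id x).mul ((hasDerivAt_const x (1:ℝ)).sub (hasDerivAt_id x))
      exact h1.congr_deriv (by simp only [Pi.sub_apply, id]; ring)
    have hsqrt : HasDerivAt (fun y : ℝ => Real.sqrt (y * (1 - y)))
        (1 / (2 * s) * (1 - 2 * x)) x :=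
      (Real.hasDerivAt_sqrt (ne_of_gt hu)).comp x hinner
    have hg : HasDerivAt (fun y : ℝ => 1/2 - κ + y * (κ * q - 1)) (κ * q - 1) x := by
      have h1 := ((hasDerivAt_id x).mul_const (κ * (q:ℝ) - 1)).const_add (1/2 - κ)
      simpa using h1
    have hf := hg.div hsqrt (ne_of_gt hs)
    rw [show (fun x : ℝ => (1/2 - κ + x * (κ * q - 1)) / Real.sqrt (x * (1 - x))) = ((fun y : ℝ => 1/2 - κ + y * (κ * q - 1)) / fun y : ℝ => Real.sqrt (y * (1 - y))) from rfl, hf.deriv]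
    apply div_neg_of_neg_of_pos
    · have hne : (2 * s) ≠ 0 := by positivity
      have hrw : (κ * q - 1) * s - (1/2 - κ + x * (κ * q - 1)) * (1 / (2 * s) * (1 - 2 * x))
          = (2 * (κ * q - 1) * (x * (1 - x)) - (1/2 - κ + x * (κ * q - 1)) * (1 - 2 * x))
            / (2 * s) := by
        rw [← hs2]
        field_simp
      rw [hrw]
      apply div_neg_of_neg_of_pos _ (by positivity)
      have hcoef : 0 ≤ κ * ((q:ℝ) - 2) := mul_nonneg hκ.le (by linarith)
      nlinarith [mul_nonneg hcoef (by linarith : (0:ℝ) ≤ 1 - x)]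
    · positivity
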